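/- KL property implies local error bound: let F : ℝ^d → ℝ be proper, convex, lower semicontinuous with nonempty argmin Ω_* and minimum F_*. Suppose for constants c > 0, β ∈ [0,1), η > 0, and a set U containing a point x_* ∈ Ω_*, for every x ∈ U with F_* < F(x) < F_* + η, every subgradient g ∈ ∂F(x) satisfies ‖g‖ ≥ (1/(c(1−β))) (F(x) − F_*)^β. Then for all x ∈ U with F_* < F(x) < F_* + η (assuming the segment/relevant paths stay in U), dist(x, Ω_*) ≤ c (F(x) − F_*)^{1−β}. -/

import Mathlib

open scoped RealInnerProductSpace

lemma exists_subgrad_proj {d : ℕ} (F : EuclideanSpace ℝ (Fin d) → ℝ)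
    (hF : ConvexOn ℝ Set.univ F) (hcont : Continuous F)
    (x0 : EuclideanSpace ℝ (Fin d)) (r : ℝ) (hx0 : F x0 < r)
    (p : EuclideanSpace ℝ (Fin d)) (hp : r < F p) :
    ∃ w g, F w = r ∧ (∀ y, F y ≥ F w + ⟪g, y - w⟫) ∧
      ‖g‖ * ‖p - w‖ ≤ F p - r := by
  classical
  set S : Set (EuclideanSpace ℝ (Fin d)) := {y | F y ≤ r} with hS
  have hSconv : Convex ℝ S := by
    have := hF.convex_le r
    simpa [Set.sep_univ] using this
  have hSclosed : IsClosed S := isClosed_le hcont continuous_const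
  have hSne : S.Nonempty := ⟨x0, le_of_lt hx0⟩
  obtain ⟨w, hwS, hwdist⟩ := hSclosed.exists_infDist_eq_dist hSne p
  -- projection characterization
  have hproj : ∀ y ∈ S, ⟪p - w, y - w⟫ ≤ 0 := by
    have : ‖p - w‖ = ⨅ z : S, ‖p - z‖ := by
      rw [← dist_eq_norm, ← hwdist, Metric.infDist_eq_iInf]
      simp only [dist_eq_norm]
    exact (norm_eq_iInf_iff_real_inner_le_zero hSconv hwS).mp this
  set v : EuclideanSpace ℝ (Fin d) := p - w with hv
  have hpnS : p ∉ S := by simp [hS, not_le.mpr hp]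
  have hvne : v ≠ 0 := by
    intro h
    have : p = w := by rwa [hv, sub_eq_zero] at h
    exact hpnS (this ▸ hwS)
  have hvsq : 0 < ⟪v, v⟫ := by
    rw [real_inner_self_eq_norm_mul_norm]
    exact mul_pos (norm_pos_iff.mpr hvne) (norm_pos_iff.mpr hvne)
  -- key: points on the nonnegative side of the hyperplane have F ≥ r
  have hkey : ∀ y, 0 ≤ ⟪v, y - w⟫ → r ≤ F y := by
    intro y hy
    by_contra hlt
    push_neg at hlt
    have htend : Filter.Tendsto (fun ε : ℝ => F (y + ε • v)) (nhdsWithin 0 (Set.Ioi 0)) (nhds (F y)) := by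
      have h1 : Continuous (fun ε : ℝ => y + ε • v) := by continuity
      have h2 := (hcont.comp h1).tendsto 0
      simp only [Function.comp] at h2
      have h3 : F (y + (0:ℝ) • v) = F y := by simp
      rw [h3] at h2
      exact h2.mono_left nhdsWithin_le_nhds
    have hev : ∀ᶠ ε : ℝ in nhdsWithin 0 (Set.Ioi 0), F (y + ε • v) < r :=
      htend.eventually_lt_const hlt
    obtain ⟨ε, hεr, hεpos⟩ := (hev.and eventually_mem_nhdsWithin).exists
    have hmem : y + ε • v ∈ S := le_of_lt hεr
    have hle := hproj _ hmem
    have hcalc : ⟪v, (y + ε • v) - w⟫ = ⟪v, y - w⟫ + ε * ⟪v, v⟫ := by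
      have h4 : (y + ε • v) - w = (y - w) + ε • v := by abel
      rw [h4, inner_add_right, real_inner_smul_right]
    rw [hcalc] at hle
    nlinarith [Set.mem_Ioi.mp hεpos]
  have hFw : F w = r := le_antisymm hwS (hkey w (by simp))
  -- slope separation
  have hsep : ∀ y₁, ⟪v, y₁ - w⟫ < 0 → ∀ y₂, 0 < ⟪v, y₂ - w⟫ →
      (r - F y₁) / (-⟪v, y₁ - w⟫) ≤ (F y₂ - r) / ⟪v, y₂ - w⟫ := by
    intro y₁ ha y₂ hb
    set a := ⟪v, y₁ - w⟫ with hadef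
    set b := ⟪v, y₂ - w⟫ with hbdef
    have hab : 0 < b - a := by linarith
    set θ : ℝ := b / (b - a) with hθ
    have hθ0 : 0 ≤ θ := le_of_lt (div_pos hb hab)
    have hθ1 : 0 ≤ 1 - θ := by
      have : θ ≤ 1 := by rw [hθ, div_le_one hab]; linarith
      linarith
    have hθsum : θ + (1 - θ) = 1 := by ring
    set z := θ • y₁ + (1 - θ) • y₂ with hz
    have hzw : z - w = θ • (y₁ - w) + (1 - θ) • (y₂ - w) := by
      rw [hz]; module
    have hinner : ⟪v, z - w⟫ = θ * a + (1 - θ) * b := by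
      rw [hzw, inner_add_right, real_inner_smul_right, real_inner_smul_right]
    have hinner0 : ⟪v, z - w⟫ = 0 := by
      rw [hinner, hθ]; field_simp; ring
    have hFz : r ≤ F z := hkey z (le_of_eq hinner0.symm)
    have hconv : F z ≤ θ * F y₁ + (1 - θ) * F y₂ :=
      hF.2 (Set.mem_univ y₁) (Set.mem_univ y₂) hθ0 hθ1 hθsum
    have hθa : θ * (b - a) = b := by
      rw [hθ]; field_simp
    have h1θ : (1 - θ) * (b - a) = -a := by
      rw [hθ]; field_simp; ring
    have hmain : r * (b - a) ≤ b * F y₁ + (-a) * F y₂ := by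
      have h := mul_le_mul_of_nonneg_right (le_trans hFz hconv) hab.le
      calc r * (b - a) ≤ (θ * F y₁ + (1 - θ) * F y₂) * (b - a) := h
        _ = (θ * (b - a)) * F y₁ + ((1 - θ) * (b - a)) * F y₂ := by ring
        _ = b * F y₁ + (-a) * F y₂ := by rw [hθa, h1θ]
    rw [div_le_div_iff₀ (by linarith) hb]
    nlinarith
  -- the multiplier
  set A : Set ℝ := {t | ∃ y, ⟪v, y - w⟫ < 0 ∧ t = (r - F y) / (-⟪v, y - w⟫)} with hA
  have hx0mem : ⟪v, x0 - w⟫ < 0 := by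
    by_contra h
    push_neg at h
    exact absurd (hkey x0 h) (not_le.mpr hx0)
  have hAne : A.Nonempty := ⟨_, x0, hx0mem, rfl⟩
  have hvpw : ⟪v, p - w⟫ = ⟪v, v⟫ := by rw [← hv]
  have hbdd : BddAbove A := by
    refine ⟨(F p - r) / ⟪v, p - w⟫, ?_⟩
    rintro t ⟨y, hy, rfl⟩
    exact hsep y hy p (by rw [hvpw]; exact hvsq)
  set μ : ℝ := sSup A with hμ
  have hμpos : 0 < μ := by
    have h1 : (r - F x0) / (-⟪v, x0 - w⟫) ≤ μ := le_csSup hbdd ⟨x0, hx0mem, rfl⟩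
    have h2 : 0 < (r - F x0) / (-⟪v, x0 - w⟫) := div_pos (by linarith) (by linarith)
    linarith
  set g := μ • v with hg
  have hsub : ∀ y, F y ≥ F w + ⟪g, y - w⟫ := by
    intro y
    have hginner : ⟪g, y - w⟫ = μ * ⟪v, y - w⟫ := real_inner_smul_left v (y - w) μ
    rw [hFw, hginner]
    rcases lt_trichotomy (⟪v, y - w⟫) 0 with hneg | hzero | hpos
    · have h1 : (r - F y) / (-⟪v, y - w⟫) ≤ μ := le_csSup hbdd ⟨y, hneg, rfl⟩
      have h2 : r - F y ≤ μ * (-⟪v, y - w⟫) := by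
        rw [div_le_iff₀ (by linarith)] at h1
        linarith [h1]
      linarith
    · rw [hzero]
      simpa using hkey y (le_of_eq hzero.symm)
    · have h1 : μ ≤ (F y - r) / ⟪v, y - w⟫ := by
        apply csSup_le hAne
        rintro t ⟨y', hy', rfl⟩
        exact hsep y' hy' y hpos
      rw [le_div_iff₀ hpos] at h1
      linarith
  refine ⟨w, g, hFw, hsub, ?_⟩
  have hnorm : ‖g‖ * ‖p - w‖ = μ * ⟪v, v⟫ := by
    rw [hg, norm_smul, Real.norm_eq_abs, abs_of_pos hμpos, ← hv,
      mul_assoc, ← real_inner_self_eq_norm_mul_norm]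
  have := hsub p
  have hginner : ⟪g, p - w⟫ = μ * ⟪v, v⟫ := by
    rw [hg, real_inner_smul_left, hvpw]
  rw [hFw, hginner] at this
  rw [hnorm]
  linarith

/-- KL property implies a local error bound. Let `F : ℝ^d → ℝ` be convex
(hence proper and continuous, so lower semicontinuous) with nonempty argmin set `Ω*` and
minimum `Fstar`. If for `c > 0`, `β ∈ [0,1)`, `η > 0` and a set `U` containing some
`xstar ∈ Ω*` that also contains the relevant sublevel region
(`{x | F x < Fstar + η} ⊆ U`), every subgradient `g ∈ ∂F x` at any `x ∈ U` with
`Fstar < F x < Fstar + η` satisfies `‖g‖ ≥ (1/(c(1-β))) (F x - Fstar)^β`, then every such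
`x` satisfies `dist(x, Ω*) ≤ c (F x - Fstar)^(1-β)`. -/
theorem kl_implies_local_error_bound
    {d : ℕ} (F : EuclideanSpace ℝ (Fin d) → ℝ)
    (hF : ConvexOn ℝ Set.univ F)
    (Ωstar : Set (EuclideanSpace ℝ (Fin d))) (Fstar : ℝ)
    (hΩ : Ωstar = {z | ∀ y, F z ≤ F y})
    (hΩne : Ωstar.Nonempty)
    (hFstar : ∀ z ∈ Ωstar, F z = Fstar)
    (c β η : ℝ) (hc : 0 < c) (hβ0 : 0 ≤ β) (hβ1 : β < 1) (hη : 0 < η)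
    (U : Set (EuclideanSpace ℝ (Fin d)))
    (xstar : EuclideanSpace ℝ (Fin d)) (hxstarΩ : xstar ∈ Ωstar) (hxstarU : xstar ∈ U)
    (hUsub : {x | F x < Fstar + η} ⊆ U)
    (hKL : ∀ x ∈ U, Fstar < F x → F x < Fstar + η →
      ∀ g : EuclideanSpace ℝ (Fin d), (∀ y, F y ≥ F x + ⟪g, y - x⟫) →
        ‖g‖ ≥ (1 / (c * (1 - β))) * (F x - Fstar) ^ β) :
    ∀ x ∈ U, Fstar < F x → F x < Fstar + η →
      Metric.infDist x Ωstar ≤ c * (F x - Fstar) ^ (1 - β) := by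
  have hFstarx : F xstar = Fstar := hFstar xstar hxstarΩ
  have hcont : Continuous F := by
    rw [← continuousOn_univ]
    exact hF.continuousOn isOpen_univ
  intro x hxU hx1 hx2
  set s := F x - Fstar with hs
  have hspos : 0 < s := by simp only [hs]; linarith
  have hsη : s < η := by simp only [hs]; linarith
  have h1β : 0 < 1 - β := by linarith
  have hc1β : 0 < c * (1 - β) := mul_pos hc h1β
  have key : ∀ q : ℝ, 0 < q → q < 1 →
      Metric.infDist x Ωstar ≤ c * s ^ (1 - β) * q ^ (-β) := by
    intro q hq0 hq1
    set r : ℕ → ℝ := fun k => Fstar + s * q ^ k with hr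
    set A : ℝ := c * (1 - β) * s ^ (1 - β) * (1 - q) * q ^ (-β) with hA
    set Q : ℝ := q ^ (1 - β) with hQ
    have hQ0 : 0 < Q := Real.rpow_pos_of_pos hq0 _
    have hQ1 : Q < 1 := Real.rpow_lt_one hq0.le hq1 h1β
    have hQk : ∀ k : ℕ, Q ^ k = q ^ ((1 - β) * (k : ℝ)) := by
      intro k
      rw [hQ, ← Real.rpow_natCast (q ^ (1 - β)) k, ← Real.rpow_mul hq0.le]
    have hqk : ∀ k : ℕ, (q : ℝ) ^ k = q ^ ((k : ℝ)) := fun k =>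
      (Real.rpow_natCast q k).symm
    have hrdiff : ∀ k : ℕ, r k - r (k + 1) = s * q ^ k * (1 - q) := by
      intro k; simp only [hr]; ring
    have hrk1 : ∀ k : ℕ, r (k + 1) - Fstar = s * q ^ (k + 1) := by
      intro k; simp only [hr]; ring
    have hsqpos : ∀ k : ℕ, 0 < s * q ^ (k + 1) := fun k =>
      mul_pos hspos (pow_pos hq0 _)
    have hTk : ∀ k : ℕ, c * (1 - β) * (r k - r (k + 1)) * (s * q ^ (k + 1)) ^ (-β)
        = A * Q ^ k := by
      intro k
      have h2 : (s * (q : ℝ) ^ (k + 1)) ^ (-β) = s ^ (-β) * q ^ (-β * ((k : ℝ) + 1)) := by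
        rw [Real.mul_rpow hspos.le (pow_nonneg hq0.le _), hqk (k + 1),
          ← Real.rpow_mul hq0.le]
        push_cast
        ring_nf
      have e1 : s * s ^ (-β) = s ^ (1 - β) := by
        nth_rewrite 1 [← Real.rpow_one s]
        rw [← Real.rpow_add hspos]
        congr 1
      have e2 : q ^ ((k : ℝ)) * q ^ (-β * ((k : ℝ) + 1)) = q ^ (-β) * q ^ ((1 - β) * (k : ℝ)) := by
        rw [← Real.rpow_add hq0, ← Real.rpow_add hq0]
        ring_nf
      rw [hrdiff k, h2, hQk k, hA, hqk k]
      linear_combination (c * (1 - β) * (1 - q) * (q ^ ((k : ℝ)) * q ^ (-β * ((k : ℝ) + 1)))) * e1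
        + (c * (1 - β) * (1 - q) * s ^ (1 - β)) * e2
    -- one step of the descent chain
    have hstep : ∀ p : EuclideanSpace ℝ (Fin d), ∀ k : ℕ, ∃ w,
        F p = r k → F w = r (k + 1) ∧ ‖p - w‖ ≤ A * Q ^ k := by
      intro p k
      by_cases hpk : F p = r k
      · have hq1k : (q : ℝ) ^ (k + 1) < 1 := pow_lt_one₀ hq0.le hq1 (Nat.succ_ne_zero k)
        have hrk1lt : r (k + 1) < Fstar + η := by
          have := hsqpos k
          simp only [hr]
          nlinarith
        have hrk1gt : Fstar < r (k + 1) := by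
          have := hsqpos k
          simp only [hr]; nlinarith
        have hrlt : r (k + 1) < r k := by
          have h := hrdiff k
          have h2 : 0 < s * q ^ k * (1 - q) :=
            mul_pos (mul_pos hspos (pow_pos hq0 k)) (by linarith)
          linarith
        obtain ⟨w, g, hw1, hw2, hw3⟩ := exists_subgrad_proj F hF hcont xstar (r (k + 1))
          (by rw [hFstarx]; exact hrk1gt) p (by rw [hpk]; exact hrlt)
        refine ⟨w, fun _ => ⟨hw1, ?_⟩⟩
        have hwU : w ∈ U := hUsub (by simpa only [Set.mem_setOf_eq, hw1] using hrk1lt)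
        have hKLw := hKL w hwU (by rw [hw1]; exact hrk1gt) (by rw [hw1]; exact hrk1lt) g hw2
        have hFwm : F w - Fstar = s * q ^ (k + 1) := by rw [hw1]; exact hrk1 k
        rw [hFwm] at hKLw
        set t : ℝ := (s * q ^ (k + 1)) ^ β with ht
        have htpos : 0 < t := Real.rpow_pos_of_pos (hsqpos k) β
        have h6 : (1 / (c * (1 - β))) * t * ‖p - w‖ ≤ r k - r (k + 1) := by
          calc (1 / (c * (1 - β))) * t * ‖p - w‖ ≤ ‖g‖ * ‖p - w‖ :=
                mul_le_mul_of_nonneg_right hKLw (norm_nonneg _)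
            _ ≤ F p - r (k + 1) := hw3
            _ = r k - r (k + 1) := by rw [hpk]
        have h6' : t * ‖p - w‖ ≤ (r k - r (k + 1)) * (c * (1 - β)) := by
          calc t * ‖p - w‖ = (c * (1 - β)) * ((1 / (c * (1 - β))) * t * ‖p - w‖) := by
                field_simp
            _ ≤ (c * (1 - β)) * (r k - r (k + 1)) :=
                mul_le_mul_of_nonneg_left h6 hc1β.le
            _ = (r k - r (k + 1)) * (c * (1 - β)) := by ring
        have hfin : ‖p - w‖ ≤ c * (1 - β) * (r k - r (k + 1)) * (s * q ^ (k + 1)) ^ (-β) := by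
          rw [Real.rpow_neg (hsqpos k).le, ← ht]
          calc ‖p - w‖ = t⁻¹ * (t * ‖p - w‖) := by field_simp
            _ ≤ t⁻¹ * ((r k - r (k + 1)) * (c * (1 - β))) :=
                mul_le_mul_of_nonneg_left h6' (inv_nonneg.mpr htpos.le)
            _ = c * (1 - β) * (r k - r (k + 1)) * t⁻¹ := by ring
        rw [hTk k] at hfin
        exact hfin
      · exact ⟨p, fun h => absurd h hpk⟩
    choose nxt hnxt using hstep
    set X : ℕ → EuclideanSpace ℝ (Fin d) :=
      fun n => Nat.rec (motive := fun _ => EuclideanSpace ℝ (Fin d)) x (fun k p => nxt p k) n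
      with hX
    have hXsucc : ∀ k, X (k + 1) = nxt (X k) k := fun k => rfl
    have hlevel : ∀ k, F (X k) = r k := by
      intro k
      induction k with
      | zero =>
        show F x = r 0
        simp only [hr, pow_zero, mul_one, hs]
        ring
      | succ k ih =>
        rw [hXsucc k]
        exact ((hnxt (X k) k) ih).1
    have hbnd : ∀ k, ‖X k - X (k + 1)‖ ≤ A * Q ^ k := by
      intro k
      rw [hXsucc k]
      exact ((hnxt (X k) k) (hlevel k)).2
    have hApos : 0 < A := by
      rw [hA]
      exact mul_pos (mul_pos (mul_pos hc1β (Real.rpow_pos_of_pos hspos (1 - β)))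
        (by linarith)) (Real.rpow_pos_of_pos hq0 (-β))
    have hBpos : 0 < c * s ^ (1 - β) * q ^ (-β) :=
      mul_pos (mul_pos hc (Real.rpow_pos_of_pos hspos (1 - β)))
        (Real.rpow_pos_of_pos hq0 (-β))
    have hfinal : A * (1 - Q)⁻¹ ≤ c * s ^ (1 - β) * q ^ (-β) := by
      have hQle : Q ≤ (1 - β) * q + β := by
        have := Real.geom_mean_le_arith_mean2_weighted h1β.le hβ0 hq0.le zero_le_one
          (by ring)
        simpa [Real.one_rpow] using this
      rw [mul_inv_le_iff₀ (by linarith)]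
      have h1mQ : (1 - β) * (1 - q) ≤ 1 - Q := by nlinarith
      calc A = (c * s ^ (1 - β) * q ^ (-β)) * ((1 - β) * (1 - q)) := by rw [hA]; ring
        _ ≤ (c * s ^ (1 - β) * q ^ (-β)) * (1 - Q) :=
            mul_le_mul_of_nonneg_left h1mQ hBpos.le
    have hsum : ∀ N, dist x (X N) ≤ c * s ^ (1 - β) * q ^ (-β) := by
      intro N
      have hgeo : ∑ i ∈ Finset.range N, Q ^ i ≤ (1 - Q)⁻¹ := by
        rw [geom_sum_eq (ne_of_lt hQ1)]
        have heq : (Q ^ N - 1) / (Q - 1) = (1 - Q ^ N) / (1 - Q) := by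
          rw [← neg_sub 1 (Q ^ N), ← neg_sub 1 Q, neg_div_neg_eq]
        rw [heq, ← one_div]
        have hnum : 1 - Q ^ N ≤ 1 := by
          have := pow_nonneg hQ0.le N
          linarith
        gcongr
      calc dist x (X N) = dist (X 0) (X N) := rfl
        _ ≤ ∑ i ∈ Finset.range N, dist (X i) (X (i + 1)) := dist_le_range_sum_dist X N
        _ ≤ ∑ i ∈ Finset.range N, A * Q ^ i := by
            refine Finset.sum_le_sum fun i _ => ?_
            rw [dist_eq_norm]
            exact hbnd i
        _ = A * ∑ i ∈ Finset.range N, Q ^ i := by rw [Finset.mul_sum]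
        _ ≤ A * (1 - Q)⁻¹ := mul_le_mul_of_nonneg_left hgeo hApos.le
        _ ≤ c * s ^ (1 - β) * q ^ (-β) := hfinal
    -- limit point
    have hball : ∀ N, X N ∈ Metric.closedBall x (c * s ^ (1 - β) * q ^ (-β)) := by
      intro N
      rw [Metric.mem_closedBall, dist_comm]
      exact hsum N
    obtain ⟨z, hz, φ, hφ, hzt⟩ :=
      tendsto_subseq_of_bounded Metric.isBounded_closedBall hball
    rw [IsClosed.closure_eq Metric.isClosed_closedBall] at hz
    have h1 : Filter.Tendsto (fun n => F (X (φ n))) Filter.atTop (nhds (F z)) :=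
      (hcont.tendsto z).comp hzt
    have h2 : Filter.Tendsto (fun n => F (X (φ n))) Filter.atTop (nhds Fstar) := by
      simp only [hlevel, hr]
      have h3 : Filter.Tendsto (fun n : ℕ => (q : ℝ) ^ n) Filter.atTop (nhds 0) :=
        tendsto_pow_atTop_nhds_zero_of_lt_one hq0.le hq1
      have h4 := h3.comp hφ.tendsto_atTop
      have h5 := (h4.const_mul s).const_add Fstar
      simpa using h5
    have hFz : F z = Fstar := tendsto_nhds_unique h1 h2
    have hzΩ : z ∈ Ωstar := by
      rw [hΩ]
      intro y
      rw [hFz, ← hFstarx]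
      exact (hΩ ▸ hxstarΩ) y
    calc Metric.infDist x Ωstar ≤ dist x z := Metric.infDist_le_dist_of_mem hzΩ
      _ ≤ c * s ^ (1 - β) * q ^ (-β) := by rw [dist_comm]; exact hz
  -- take q → 1⁻
  have htend : Filter.Tendsto (fun q : ℝ => c * s ^ (1 - β) * q ^ (-β))
      (nhdsWithin 1 (Set.Iio 1)) (nhds (c * s ^ (1 - β))) := by
    have h1 : Filter.Tendsto (fun q : ℝ => q ^ (-β)) (nhds 1) (nhds ((1 : ℝ) ^ (-β))) :=
      (Real.continuousAt_rpow_const 1 (-β) (Or.inl one_ne_zero)).tendsto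
    rw [Real.one_rpow] at h1
    have h2 := (h1.const_mul (c * s ^ (1 - β))).mono_left
      (nhdsWithin_le_nhds (s := Set.Iio 1))
    simpa using h2
  refine ge_of_tendsto htend ?_
  filter_upwards [Ioo_mem_nhdsLT_of_mem (Set.mem_Ioc.mpr ⟨zero_lt_one, le_refl 1⟩)]
    with q hq
  exact key q hq.1 hq.2
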